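/- arXiv:1403.3412 — 3 statements merged into one kernel-verified Lean document; each statement's English description precedes it below -/
import Mathlib

section
/- Let ρ₀ : ℂⁿ → ℝ be measurable and set Ω = {z ∈ ℂⁿ : ρ₀(z) < 0}. Let h : ℂ^m → [0,∞) be measurable and suppose there are constants c ≥ 0 and s > 0 such that λ({w ∈ ℂ^m : h(w) < t}) = c·t^s for every t > 0. Set Ω̃ = {(z,w) ∈ ℂⁿ × ℂ^m : ρ₀(z) + h(w) < 0}. Then for every measurable function u : ℂⁿ → ℂ and every real p with 0 < p < ∞, one has the identity in [0,∞]: ∫_{Ω̃} |u(z)|^p dλ(z,w) = c · ∫_Ω |u(z)|^p (−ρ₀(z))^s dλ(z). -/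
open MeasureTheory ENNReal

/-- Fubini-type identity: if `λ({h < t}) = c·t^s` for all `t > 0`, then for
`Ω̃ = {(z,w) : ρ₀ z + h w < 0}` and any measurable `u` and `0 < p < ∞`,
`∫_{Ω̃} |u(z)|^p dλ(z,w) = c · ∫_Ω |u(z)|^p (−ρ₀ z)^s dλ(z)` as an identity in `[0,∞]`. -/
theorem stmt_3 (n m : ℕ) (ρ₀ : (Fin n → ℂ) → ℝ) (hρ₀ : Measurable ρ₀)
    (h : (Fin m → ℂ) → ℝ) (hh_meas : Measurable h) (hh_nonneg : ∀ w, 0 ≤ h w)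
    (c s : ℝ) (hc : 0 ≤ c) (hs : 0 < s)
    (hvol : ∀ t : ℝ, 0 < t →
      volume {w : Fin m → ℂ | h w < t} = ENNReal.ofReal (c * t ^ s))
    (u : (Fin n → ℂ) → ℂ) (hu : Measurable u) (p : ℝ) (hp : 0 < p) :
    ∫⁻ x in {x : (Fin n → ℂ) × (Fin m → ℂ) | ρ₀ x.1 + h x.2 < 0},
        ENNReal.ofReal (‖u x.1‖ ^ p) =
      ENNReal.ofReal c *
        ∫⁻ z in {z : Fin n → ℂ | ρ₀ z < 0},
          ENNReal.ofReal (‖u z‖ ^ p * (-ρ₀ z) ^ s) := by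
  set g : (Fin n → ℂ) → ℝ≥0∞ := fun z => ENNReal.ofReal (‖u z‖ ^ p) with hg
  have hgmeas : Measurable g :=
    ((continuous_norm.measurable.comp hu).pow_const p).ennreal_ofReal
  have hS : MeasurableSet {x : (Fin n → ℂ) × (Fin m → ℂ) | ρ₀ x.1 + h x.2 < 0} :=
    measurableSet_lt ((hρ₀.comp measurable_fst).add (hh_meas.comp measurable_snd))
      measurable_const
  have hind : Measurable ({x : (Fin n → ℂ) × (Fin m → ℂ) | ρ₀ x.1 + h x.2 < 0}.indicator
      fun x => g x.1) := (hgmeas.comp measurable_fst).indicator hS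
  rw [← lintegral_indicator hS _, Measure.volume_eq_prod,
    lintegral_prod _ hind.aemeasurable]
  have key : ∀ z : Fin n → ℂ,
      (∫⁻ w, ({x : (Fin n → ℂ) × (Fin m → ℂ) | ρ₀ x.1 + h x.2 < 0}.indicator
        (fun x => g x.1) (z, w))) =
      {z : Fin n → ℂ | ρ₀ z < 0}.indicator
        (fun z => ENNReal.ofReal c * ENNReal.ofReal (‖u z‖ ^ p * (-ρ₀ z) ^ s)) z := by
    intro z
    have hslice : (fun w => ({x : (Fin n → ℂ) × (Fin m → ℂ) | ρ₀ x.1 + h x.2 < 0}.indicator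
        (fun x => g x.1) (z, w))) =
        {w : Fin m → ℂ | h w < -ρ₀ z}.indicator (fun _ => g z) := by
      funext w
      simp only [Set.indicator_apply, Set.mem_setOf_eq]
      congr 1
      simp only [eq_iff_iff]
      constructor <;> intro hh <;> linarith
    rw [hslice, lintegral_indicator_const (measurableSet_lt hh_meas measurable_const)]
    by_cases hz : ρ₀ z < 0
    · rw [Set.indicator_apply, if_pos (show z ∈ {z | ρ₀ z < 0} from hz), hvol (-ρ₀ z) (by linarith)]
      rw [ENNReal.ofReal_mul hc, mul_comm (g z), mul_assoc,
        ← ENNReal.ofReal_mul (Real.rpow_nonneg (by linarith) s)]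
      congr 2
      ring
    · rw [Set.indicator_apply, if_neg (show z ∉ {z | ρ₀ z < 0} from hz)]
      have : {w : Fin m → ℂ | h w < -ρ₀ z} = ∅ := by
        ext w; simp only [Set.mem_setOf_eq, Set.mem_empty_iff_false, iff_false, not_lt]
        have := hh_nonneg w; linarith
      simp [this]
  simp only [key]
  rw [lintegral_indicator (measurableSet_lt hρ₀ measurable_const) _,
    lintegral_const_mul _ (by
      exact (((continuous_norm.measurable.comp hu).pow_const p).mul
        ((hρ₀.neg).pow_const s)).ennreal_ofReal)]
end

section
/- Let D ⊂ ℂ^m be a nonempty bounded open set which is complete Reinhardt, i.e. whenever w ∈ D and v ∈ ℂ^m satisfies |v_i| ≤ |w_i| for all i = 1, …, m, then v ∈ D. If u : D → ℂ is holomorphic and Lebesgue integrable on D, then ∫_D u dλ = u(0) · λ(D). -/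
open MeasureTheory Complex Metric Set
open scoped Real

/-- Mean value over the unit circle for a function holomorphic on a neighborhood
of the closed unit disc. -/
lemma circle_mean_value {f : ℂ → ℂ} {S : Set ℂ} (hS : IsOpen S)
    (hball : closedBall (0:ℂ) 1 ⊆ S) (hf : DifferentiableOn ℂ f S) :
    ∫ θ in (0:ℝ)..(2*π), f (Complex.exp (θ * Complex.I)) = (2*π : ℝ) • f 0 := by
  have hsub : ball (0:ℂ) 1 ⊆ S := (ball_subset_closedBall).trans hball
  have hd : DiffContOnCl ℂ f (ball (0:ℂ) 1) :=
    ⟨hf.mono hsub, (hf.continuousOn).mono (by rwa [closure_ball (0:ℂ) one_ne_zero])⟩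
  have h := hd.circleIntegral_sub_inv_smul (w := 0) (mem_ball_self one_pos)
  rw [circleIntegral] at h
  simp only [deriv_circleMap, circleMap_zero, sub_zero, smul_eq_mul, Complex.ofReal_one,
    one_mul] at h
  have key : ∀ θ ∈ Set.uIcc (0:ℝ) (2*π), (Complex.exp (θ * Complex.I) * Complex.I) *
      ((Complex.exp (θ * Complex.I))⁻¹ * f (Complex.exp (θ * Complex.I)))
      = Complex.I * f (Complex.exp (θ * Complex.I)) := by
    intro θ _
    have hne : Complex.exp (θ * Complex.I) ≠ 0 := Complex.exp_ne_zero _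
    field_simp
  rw [intervalIntegral.integral_congr key, intervalIntegral.integral_const_mul] at h
  have h2 : Complex.I * (∫ θ in (0:ℝ)..(2*π), f (Complex.exp (θ * Complex.I)))
      = Complex.I * ((2*π : ℝ) • f 0) := by
    rw [h, Complex.real_smul]
    push_cast
    ring
  exact mul_left_cancel₀ Complex.I_ne_zero h2

/-- Mean value property over a bounded complete Reinhardt domain `D ⊆ ℂ^m`:
if `u` is holomorphic and integrable on `D`, then `∫_D u dλ = u(0)·λ(D)`. -/
theorem stmt_5 (m : ℕ) (D : Set (Fin m → ℂ)) (hD_ne : D.Nonempty)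
    (hD_open : IsOpen D) (hD_bdd : Bornology.IsBounded D)
    (hD_reinhardt : ∀ w ∈ D, ∀ v : Fin m → ℂ,
      (∀ i, ‖v i‖ ≤ ‖w i‖) → v ∈ D)
    (u : (Fin m → ℂ) → ℂ)
    (hu_hol : DifferentiableOn ℂ u D)
    (hu_int : IntegrableOn u D) :
    ∫ w in D, u w = (volume D).toReal • u 0 := by
  classical
  set e : ℝ → ℂ := fun θ => Complex.exp (θ * Complex.I) with he
  have habs : ∀ θ, ‖e θ‖ = 1 := fun θ => Complex.norm_exp_ofReal_mul_I θ
  set T : ℝ → (Fin m → ℂ) → (Fin m → ℂ) := fun θ w i => e θ * w i with hT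
  have hcoe : ∀ θ, (fun z : ℂ => e θ * z) = ⇑(rotation (Circle.exp θ)) := by
    intro θ
    funext z
    rw [rotation_apply, Circle.coe_exp]
  have hTmp : ∀ θ, MeasurePreserving (T θ) volume volume := by
    intro θ
    refine volume_preserving_pi (fun i => ?_)
    show MeasurePreserving (fun z : ℂ => e θ * z) volume volume
    rw [hcoe θ]
    exact (rotation (Circle.exp θ)).measurePreserving
  have hTemb : ∀ θ, MeasurableEmbedding (T θ) := by
    intro θ
    have heq : T θ = ⇑(MeasurableEquiv.piCongrRight fun _ : Fin m =>
        (rotation (Circle.exp θ)).toMeasurableEquiv) := by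
      funext w
      funext i
      show e θ * w i = rotation (Circle.exp θ) (w i)
      rw [rotation_apply, Circle.coe_exp]
    rw [heq]
    exact (MeasurableEquiv.piCongrRight _).measurableEmbedding
  have hTD : ∀ θ, T θ ⁻¹' D = D := by
    intro θ
    ext w
    constructor
    · intro hw
      refine hD_reinhardt _ hw w (fun i => ?_)
      show ‖w i‖ ≤ ‖e θ * w i‖
      rw [norm_mul, habs θ, one_mul]
    · intro hw
      refine hD_reinhardt _ hw _ (fun i => ?_)
      show ‖e θ * w i‖ ≤ ‖w i‖
      rw [norm_mul, habs θ, one_mul]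
  have hrotinv : ∀ (g : (Fin m → ℂ) → ℂ) (θ : ℝ),
      ∫ w in D, g (T θ w) = ∫ w in D, g w := by
    intro g θ
    have := (hTmp θ).setIntegral_preimage_emb (hTemb θ) g D
    rwa [hTD θ] at this
  have hrotinvR : ∀ (g : (Fin m → ℂ) → ℝ) (θ : ℝ),
      ∫ w in D, g (T θ w) = ∫ w in D, g w := by
    intro g θ
    have := (hTmp θ).setIntegral_preimage_emb (hTemb θ) g D
    rwa [hTD θ] at this
  have hslice : ∀ θ, IntegrableOn (fun w => u (T θ w)) D := by
    intro θ
    have := ((hTmp θ).integrableOn_comp_preimage (hTemb θ) (f := u) (s := D)).mpr hu_int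
    rwa [hTD θ] at this
  have hDmeas : MeasurableSet D := hD_open.measurableSet
  have hπpos : (0:ℝ) ≤ 2*π := by positivity
  have hu_cont : ContinuousOn u D := hu_hol.continuousOn
  have hc1 : Continuous fun p : ℝ × (Fin m → ℂ) => e p.1 :=
    Complex.continuous_exp.comp ((Complex.continuous_ofReal.comp continuous_fst).mul
      continuous_const)
  have hgcont : Continuous (fun p : ℝ × (Fin m → ℂ) => T p.1 p.2) :=
    continuous_pi fun i => hc1.mul ((continuous_apply i).comp continuous_snd)
  have hFcont : ContinuousOn (fun p : ℝ × (Fin m → ℂ) => u (T p.1 p.2))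
      ((Set.Ioc (0:ℝ) (2*π)) ×ˢ D) := by
    refine hu_cont.comp hgcont.continuousOn ?_
    rintro ⟨θ, w⟩ ⟨-, hw⟩
    rw [← hTD θ] at hw
    exact hw
  have hFaesm : AEStronglyMeasurable (fun p : ℝ × (Fin m → ℂ) => u (T p.1 p.2))
      ((volume.restrict (Set.Ioc (0:ℝ) (2*π))).prod (volume.restrict D)) := by
    rw [Measure.prod_restrict]
    exact hFcont.aestronglyMeasurable (measurableSet_Ioc.prod hDmeas)
  have hFint : Integrable (fun p : ℝ × (Fin m → ℂ) => u (T p.1 p.2))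
      ((volume.restrict (Set.Ioc (0:ℝ) (2*π))).prod (volume.restrict D)) := by
    rw [integrable_prod_iff hFaesm]
    constructor
    · exact Filter.Eventually.of_forall fun θ => hslice θ
    · apply Integrable.mono' (g := fun _ : ℝ => ∫ w in D, ‖u w‖)
      · exact integrable_const _
      · refine AEStronglyMeasurable.congr (f := fun _ : ℝ => ∫ w in D, ‖u w‖)
          aestronglyMeasurable_const ?_
        refine Filter.Eventually.of_forall fun θ => ?_
        exact (hrotinvR (fun w => ‖u w‖) θ).symm
      · refine Filter.Eventually.of_forall fun θ => ?_
        rw [hrotinvR (fun w => ‖u w‖) θ, Real.norm_eq_abs,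
          _root_.abs_of_nonneg (integral_nonneg fun w => norm_nonneg _)]
  have hswap := integral_integral_swap (f := fun (θ : ℝ) (w : Fin m → ℂ) => u (T θ w)) hFint
  have hLHS : (∫ θ in Set.Ioc (0:ℝ) (2*π), ∫ w in D, u (T θ w)) = (2*π : ℝ) • ∫ w in D, u w := by
    have hfun : (fun θ : ℝ => ∫ w in D, u (T θ w)) = fun _ : ℝ => ∫ w in D, u w := by
      funext θ; exact hrotinv u θ
    rw [hfun, setIntegral_const, measureReal_def, Real.volume_Ioc, ENNReal.toReal_ofReal (by linarith)]
    norm_num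
  have hinner : ∀ w ∈ D, (∫ θ in Set.Ioc (0:ℝ) (2*π), u (T θ w)) = (2*π : ℝ) • u 0 := by
    intro w hw
    rw [← intervalIntegral.integral_of_le hπpos]
    have hSopen : IsOpen {z : ℂ | (fun i => z * w i) ∈ D} :=
      hD_open.preimage (continuous_pi fun i => continuous_id.mul continuous_const)
    have hSball : closedBall (0:ℂ) 1 ⊆ {z : ℂ | (fun i => z * w i) ∈ D} := by
      intro z hz
      rw [mem_closedBall, dist_zero_right] at hz
      refine hD_reinhardt w hw _ (fun i => ?_)
      show ‖z * w i‖ ≤ _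
      rw [norm_mul]
      calc ‖z‖ * ‖w i‖ ≤ 1 * ‖w i‖ :=
            mul_le_mul_of_nonneg_right hz (norm_nonneg _)
        _ = ‖w i‖ := one_mul _
    have hfd : DifferentiableOn ℂ (fun z : ℂ => u (fun i => z * w i))
        {z : ℂ | (fun i => z * w i) ∈ D} := by
      refine DifferentiableOn.comp hu_hol ?_ (fun z hz => hz)
      intro z _
      refine DifferentiableAt.differentiableWithinAt ?_
      exact differentiableAt_pi.mpr fun i => differentiableAt_id.mul_const (w i)
    have hmv := circle_mean_value hSopen hSball hfd
    have h0 : (fun i : Fin m => (0:ℂ) * w i) = (0 : Fin m → ℂ) := by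
      funext i; simp
    rw [h0] at hmv
    exact hmv
  have hRHS : (∫ w in D, ∫ θ in Set.Ioc (0:ℝ) (2*π), u (T θ w))
      = (volume D).toReal • ((2*π : ℝ) • u 0) := by
    rw [setIntegral_congr_fun hDmeas hinner, setIntegral_const, measureReal_def]
  rw [hLHS, hRHS, smul_comm] at hswap
  have h2π : (2*π : ℝ) ≠ 0 := by positivity
  exact smul_right_injective ℂ h2π hswap
end

section
/- Let ρ₀ : ℂⁿ → ℝ be continuous, Ω = {z ∈ ℂⁿ : ρ₀(z) < 0}, let q and m be positive integers, and Ω̃ = {(z,w) ∈ ℂⁿ × ℂ^m : ρ₀(z) + |w|^{2q} < 0}. Let v : Ω̃ → ℂ be measurable and such that for every z ∈ Ω the function w ↦ v(z,w) is holomorphic on the ball {w ∈ ℂ^m : |w|^{2q} < −ρ₀(z)}, and let g : Ω → ℂ be measurable. Assume that (z,w) ↦ v(z,w)·conj(g(z)) is Lebesgue integrable on Ω̃. Then z ↦ v(z,0)·conj(g(z))·(−ρ₀(z))^{m/q} is Lebesgue integrable on Ω and λ(B_{ℂ^m}(0,1)) · ∫_Ω v(z,0) · conj(g(z)) · (−ρ₀(z))^{m/q}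 dλ(z) = ∫_{Ω̃} v(z,w) · conj(g(z)) dλ(z,w). -/
open MeasureTheory

section Helpers
open Set Pointwise


lemma circleMV {f : ℂ → ℂ} {U : Set ℂ} (hU : IsOpen U) (hsub : Metric.closedBall (0:ℂ) 1 ⊆ U)
    (hf : DifferentiableOn ℂ f U) :
    ∫ θ in (0:ℝ)..(2*Real.pi), f (circleMap 0 1 θ) = (2*Real.pi : ℝ) • f 0 := by
  have hd : ∀ z ∈ Metric.ball (0:ℂ) 1 \ (∅ : Set ℂ), DifferentiableAt ℂ f z := fun z hz =>
    (hf _ (hsub (Metric.ball_subset_closedBall hz.1))).differentiableAt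
      (hU.mem_nhds (hsub (Metric.ball_subset_closedBall hz.1)))
  have h := Complex.circleIntegral_sub_center_inv_smul_of_differentiable_on_off_countable
    one_pos Set.countable_empty (hf.continuousOn.mono hsub) hd
  rw [circleIntegral] at h
  simp only [deriv_circleMap, sub_zero, smul_eq_mul] at h
  have hne : ∀ θ : ℝ, circleMap 0 1 θ ≠ 0 := by
    intro θ h0
    have := norm_circleMap_zero 1 θ
    rw [h0] at this; simp at this
  have hcongr : (fun θ : ℝ => circleMap 0 1 θ * Complex.I * ((circleMap 0 1 θ)⁻¹ * f (circleMap 0 1 θ)))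
      = fun θ : ℝ => Complex.I * f (circleMap 0 1 θ) := by
    funext θ
    field_simp [hne θ]
  rw [hcongr, intervalIntegral.integral_const_mul] at h
  have h2 : Complex.I * ∫ θ in (0:ℝ)..(2*Real.pi), f (circleMap 0 1 θ)
      = Complex.I * ((2*Real.pi : ℝ) • f 0) := by
    rw [h]; push_cast [smul_eq_mul, Complex.real_smul]; ring
  exact mul_left_cancel₀ Complex.I_ne_zero h2


lemma Qsmul {m : ℕ} (c : ℂ) (w : Fin m → ℂ) :
    ∑ i, ‖(c • w) i‖ ^ 2 = ‖c‖ ^ 2 * ∑ i, ‖w i‖ ^ 2 := by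
  simp [Pi.smul_apply, smul_eq_mul, map_mul, mul_pow, Finset.mul_sum]

lemma QsmulR {m : ℕ} (c : ℝ) (w : Fin m → ℂ) :
    ∑ i, ‖(c • w) i‖ ^ 2 = c ^ 2 * ∑ i, ‖w i‖ ^ 2 := by
  have : ∀ i, ‖(c • w) i‖ = |c| * ‖w i‖ := by
    intro i
    simpa [Pi.smul_apply, norm_smul] using (norm_smul c (w i))
  simp [this, mul_pow, Finset.mul_sum, sq_abs]

lemma Qnonneg {m : ℕ} (w : Fin m → ℂ) : 0 ≤ ∑ i, ‖w i‖ ^ 2 :=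
  Finset.sum_nonneg fun i _ => sq_nonneg _

lemma Qcont {m : ℕ} : Continuous (fun w : Fin m → ℂ => ∑ i, ‖w i‖ ^ 2) :=
  continuous_finset_sum _ fun i _ => (continuous_norm.comp (continuous_apply i)).pow 2

lemma Bopen {m : ℕ} (r : ℝ) : IsOpen {w : Fin m → ℂ | ∑ i, ‖w i‖ ^ 2 < r} :=
  isOpen_lt Qcont continuous_const

lemma Bscale {m : ℕ} {r : ℝ} (hr : 0 < r) :
    {w : Fin m → ℂ | ∑ i, ‖w i‖ ^ 2 < r}
      = Real.sqrt r • {w : Fin m → ℂ | ∑ i, ‖w i‖ ^ 2 < 1} := by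
  have hs : Real.sqrt r ≠ 0 := by positivity
  ext w
  rw [Set.mem_smul_set_iff_inv_smul_mem₀ hs]
  simp only [Set.mem_setOf_eq, QsmulR]
  rw [inv_pow, Real.sq_sqrt hr.le]
  rw [inv_mul_lt_iff₀ hr, mul_one]

lemma Bvol {m : ℕ} {r : ℝ} (hr : 0 < r) :
    volume {w : Fin m → ℂ | ∑ i, ‖w i‖ ^ 2 < r}
      = ENNReal.ofReal (r ^ m) * volume {w : Fin m → ℂ | ∑ i, ‖w i‖ ^ 2 < 1} := by
  rw [Bscale hr, Measure.addHaar_smul]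
  congr 2
  have hfr : Module.finrank ℝ (Fin m → ℂ) = 2 * m := by
    simp [Module.finrank_pi_fintype]; ring
  rw [hfr, abs_of_nonneg (by positivity)]
  rw [pow_mul, Real.sq_sqrt hr.le]

lemma Bfin {m : ℕ} (r : ℝ) :
    volume {w : Fin m → ℂ | ∑ i, ‖w i‖ ^ 2 < r} < ⊤ := by
  have hsub : {w : Fin m → ℂ | ∑ i, ‖w i‖ ^ 2 < r}
      ⊆ Metric.closedBall 0 (Real.sqrt r) := by
    intro w hw
    simp only [Set.mem_setOf_eq] at hw
    rw [Metric.mem_closedBall, dist_zero_right]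
    refine pi_norm_le_iff_of_nonneg (Real.sqrt_nonneg r) |>.2 fun i => ?_
    have h1 : ‖w i‖ ^ 2 ≤ ∑ j, ‖w j‖ ^ 2 :=
      Finset.single_le_sum (f := fun j => ‖w j‖ ^ 2) (fun j _ => sq_nonneg _) (Finset.mem_univ i)
    have h2 : ‖w i‖ ^ 2 ≤ r := le_of_lt (lt_of_le_of_lt h1 hw)
    have := Real.sqrt_le_sqrt h2
    rwa [Real.sqrt_sq (norm_nonneg _)] at this
  exact lt_of_le_of_lt (measure_mono hsub) Metric.isBounded_closedBall.measure_lt_top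

lemma ballMV {m : ℕ} {r : ℝ} (hr : 0 < r) {f : (Fin m → ℂ) → ℂ}
    (hd : DifferentiableOn ℂ f {w : Fin m → ℂ | ∑ i, ‖w i‖ ^ 2 < r})
    (hi : IntegrableOn f {w : Fin m → ℂ | ∑ i, ‖w i‖ ^ 2 < r}) :
    ∫ w in {w : Fin m → ℂ | ∑ i, ‖w i‖ ^ 2 < r}, f w
      = (volume {w : Fin m → ℂ | ∑ i, ‖w i‖ ^ 2 < r}).toReal • f 0 := by
  set B := {w : Fin m → ℂ | ∑ i, ‖w i‖ ^ 2 < r} with hB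
  have hBm : MeasurableSet B := (Bopen r).measurableSet
  set μ := volume.restrict B with hμ
  -- rotation invariance of μ
  have hrotv : ∀ c : Circle, MeasurePreserving (fun w : Fin m → ℂ => (c : ℂ) • w) volume volume := by
    intro c
    have h1 := volume_preserving_pi (fun _ : Fin m => (rotation c).measurePreserving)
    have h2 : (fun (a : Fin m → ℂ) (i : Fin m) => (rotation c) (a i))
        = fun w : Fin m → ℂ => (c : ℂ) • w := by
      funext w i; simp [rotation_apply, Pi.smul_apply, smul_eq_mul]
    rwa [h2] at h1
  have hrotpre : ∀ c : Circle, (fun w : Fin m → ℂ => (c : ℂ) • w) ⁻¹' B = B := by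
    intro c
    ext w
    simp only [Set.mem_preimage, hB, Set.mem_setOf_eq, Qsmul, Circle.norm_coe, one_pow, one_mul]
  have hrot : ∀ c : Circle, MeasurePreserving (fun w : Fin m → ℂ => (c : ℂ) • w) μ μ := by
    intro c
    have := (hrotv c).restrict_preimage (s := B) hBm
    rwa [hrotpre c] at this
  -- the rotation is a measurable embedding
  have hemb : ∀ c : Circle, MeasurableEmbedding (fun w : Fin m → ℂ => (c : ℂ) • w) := by
    intro c
    have hc0 : (c : ℂ) ≠ 0 := by
      intro h; have := Circle.norm_coe c; rw [h] at this; simp at this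
    let u : ℂˣ := Units.mk0 (c : ℂ) hc0
    have : (fun w : Fin m → ℂ => (c : ℂ) • w) = fun w => u • w := by
      funext w; simp [u, Units.smul_def]
    rw [this]
    exact (Homeomorph.smul u (α := Fin m → ℂ)).measurableEmbedding
  have hrint : ∀ c : Circle, ∫ w, f ((c : ℂ) • w) ∂μ = ∫ w, f w ∂μ := by
    intro c
    exact (hrot c).integral_comp (hemb c) f
  -- circle elements from circleMap
  have habs : ∀ θ : ℝ, ‖circleMap 0 1 θ‖ = 1 := by
    intro θ; simpa using norm_circleMap_zero 1 θ
  let cm : ℝ → Circle := fun θ => ⟨circleMap 0 1 θ,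
    mem_sphere_zero_iff_norm.2 (by simpa using habs θ)⟩
  have hcm : ∀ θ, (cm θ : ℂ) = circleMap 0 1 θ := fun θ => rfl
  -- Fubini on ℝ × (Fin m → ℂ)
  set ν := volume.restrict (Set.Ioc (0:ℝ) (2*Real.pi)) with hν
  have hψm : Measurable (Function.uncurry fun (θ : ℝ) (w : Fin m → ℂ) => circleMap 0 1 θ • w) := by
    apply Continuous.measurable
    exact (continuous_circleMap 0 1).comp continuous_fst |>.smul continuous_snd
  have hψ : MeasurePreserving (fun p : ℝ × (Fin m → ℂ) => (p.1, circleMap 0 1 p.1 • p.2))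
      (ν.prod μ) (ν.prod μ) :=
    (MeasurePreserving.id ν).skew_product hψm
      (Filter.Eventually.of_forall fun θ => by
        have := (hrot (cm θ)).map_eq
        simpa [hcm] using this)
  have hψemb : MeasurableEmbedding (fun p : ℝ × (Fin m → ℂ) => (p.1, circleMap 0 1 p.1 • p.2)) := by
    have hhomeo : Continuous (fun p : ℝ × (Fin m → ℂ) => (p.1, circleMap 0 1 p.1 • p.2)) :=
      continuous_fst.prodMk ((continuous_circleMap 0 1).comp continuous_fst |>.smul continuous_snd)
    have hinv : Continuous (fun p : ℝ × (Fin m → ℂ) => (p.1, (circleMap 0 1 p.1)⁻¹ • p.2)) :=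
      continuous_fst.prodMk (((continuous_circleMap 0 1).comp continuous_fst).inv₀
        (fun p => by
          intro h0
          simp only [Function.comp_apply] at h0
          have := habs p.1; rw [h0] at this; simp at this) |>.smul continuous_snd)
    have hne : ∀ θ : ℝ, circleMap 0 1 θ ≠ 0 := by
      intro θ h0; have := habs θ; rw [h0] at this; simp at this
    exact (Homeomorph.mk ⟨fun p => (p.1, circleMap 0 1 p.1 • p.2),
      fun p => (p.1, (circleMap 0 1 p.1)⁻¹ • p.2),
      fun p => by simp [smul_smul, inv_mul_cancel₀ (hne p.1)],
      fun p => by simp [smul_smul, mul_inv_cancel₀ (hne p.1)]⟩ hhomeo hinv).measurableEmbedding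
  -- integrability of (θ, w) ↦ f (circleMap θ • w)
  have hsnd : Integrable (fun p : ℝ × (Fin m → ℂ) => f p.2) (ν.prod μ) := by
    have h1 : Integrable (fun p : ℝ × (Fin m → ℂ) => (1:ℂ) * f p.2) (ν.prod μ) :=
      (integrable_const (1:ℂ)).mul_prod hi
    simpa using h1
  have hF : Integrable (Function.uncurry fun (θ : ℝ) (w : Fin m → ℂ) =>
      f (circleMap 0 1 θ • w)) (ν.prod μ) := by
    have : (Function.uncurry fun (θ : ℝ) (w : Fin m → ℂ) => f (circleMap 0 1 θ • w))
        = (fun p : ℝ × (Fin m → ℂ) => f p.2) ∘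
          (fun p : ℝ × (Fin m → ℂ) => (p.1, circleMap 0 1 p.1 • p.2)) := rfl
    rw [this]
    exact ((hψ.integrable_comp_emb hψemb).2 hsnd)
  have hswap := integral_integral_swap hF
  -- LHS: each θ-slice integrates to ∫ f dμ
  have hL : ∫ θ, ∫ w, f (circleMap 0 1 θ • w) ∂μ ∂ν = (2*Real.pi) • ∫ w, f w ∂μ := by
    have h1 : ∀ θ : ℝ, ∫ w, f (circleMap 0 1 θ • w) ∂μ = ∫ w, f w ∂μ := by
      intro θ
      have := hrint (cm θ)
      simpa [hcm] using this
    rw [integral_congr_ae (Filter.Eventually.of_forall h1)]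
    rw [integral_const]
    congr 1
    rw [hν, measureReal_def, Measure.restrict_apply_univ, Real.volume_Ioc]
    rw [ENNReal.toReal_ofReal (by linarith [Real.pi_pos])]
    ring
  -- RHS: each w-slice integrates to 2π f 0
  have hR : ∫ w, (∫ θ, f (circleMap 0 1 θ • w) ∂ν) ∂μ
      = (volume B).toReal • ((2*Real.pi) • f 0) := by
    have h1 : ∀ w ∈ B, ∫ θ, f (circleMap 0 1 θ • w) ∂ν = (2*Real.pi) • f 0 := by
      intro w hw
      have hQw : ∑ i, ‖w i‖ ^ 2 < r := hw
      -- one-variable mean value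
      set U : Set ℂ := {ζ : ℂ | ‖ζ‖ ^ 2 * ∑ i, ‖w i‖ ^ 2 < r} with hU
      have hUo : IsOpen U := isOpen_lt (by
        exact (continuous_norm.pow 2).mul continuous_const) continuous_const
      have hUsub : Metric.closedBall (0:ℂ) 1 ⊆ U := by
        intro ζ hζ
        rw [Metric.mem_closedBall, dist_zero_right] at hζ
        have h2 : ‖ζ‖ ^ 2 ≤ 1 := by
          have : ‖ζ‖ ≤ 1 := hζ
          nlinarith [norm_nonneg ζ]
        have h3 : ‖ζ‖ ^ 2 * ∑ i, ‖w i‖ ^ 2 ≤ ∑ i, ‖w i‖ ^ 2 := by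
          nlinarith [Qnonneg w]
        exact lt_of_le_of_lt h3 hQw
      have hmaps : Set.MapsTo (fun ζ : ℂ => ζ • w) U B := by
        intro ζ hζ
        simp only [hB, Set.mem_setOf_eq, Qsmul]
        exact hζ
      have hdsmul : DifferentiableOn ℂ (fun ζ : ℂ => ζ • w) U :=
        (differentiable_id.smul_const w).differentiableOn
      have hcomp : DifferentiableOn ℂ (fun ζ : ℂ => f (ζ • w)) U := hd.comp hdsmul hmaps
      have := circleMV hUo hUsub hcomp
      rw [intervalIntegral.integral_of_le (by positivity)] at this
      rw [hν]
      simpa [zero_smul] using this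
    have h2 : ∀ᵐ w ∂μ, (∫ θ, f (circleMap 0 1 θ • w) ∂ν) = (2*Real.pi) • f 0 := by
      rw [hμ]
      filter_upwards [ae_restrict_mem hBm] with w hw using h1 w hw
    rw [integral_congr_ae h2, integral_const]
    congr 1
    rw [hμ, measureReal_def, Measure.restrict_apply_univ]
  rw [hL, hR] at hswap
  have h2π : (2*Real.pi : ℝ) ≠ 0 := by positivity
  have := smul_right_injective ℂ h2π
  rw [smul_comm ((volume B).toReal)] at hswap
  exact this hswap

lemma pow_lt_iff_rpow {q : ℕ} (hq : 0 < q) {a b : ℝ} (ha : 0 ≤ a) (hb : 0 < b) :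
    a ^ q < b ↔ a < b ^ ((q:ℝ)⁻¹) := by
  constructor
  · intro h; by_contra h'; push_neg at h'
    have h2 := pow_le_pow_left₀ (Real.rpow_nonneg hb.le _) h' q
    rw [Real.rpow_inv_natCast_pow hb.le hq.ne'] at h2; linarith
  · intro h
    have h2 := pow_lt_pow_left₀ h ha hq.ne'
    rwa [Real.rpow_inv_natCast_pow hb.le hq.ne'] at h2


end Helpers

section Main
open Set Pointwise

/-- Orthogonality identity: if `v` is fiberwise holomorphic in `w` on
`Ω̃ = {(z,w) : ρ₀ z + |w|^{2q} < 0}`, `g` is measurable on `Ω`, and `(z,w) ↦ v(z,w)·conj(g z)`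
is integrable on `Ω̃`, then `z ↦ v(z,0)·conj(g z)·(−ρ₀ z)^{m/q}` is integrable on `Ω` and
`λ(B(0,1)) · ∫_Ω v(z,0)·conj(g z)·(−ρ₀ z)^{m/q} dλ(z) = ∫_{Ω̃} v·conj(g∘pr₁) dλ`.
Here `|w|` denotes the Euclidean norm, `|w|^{2q} = (∑ i, |w i|²)^q`. -/
theorem stmt_9 (n m q : ℕ) (hm : 0 < m) (hq : 0 < q)
    (ρ₀ : (Fin n → ℂ) → ℝ) (hρ₀ : Continuous ρ₀)
    (v : (Fin n → ℂ) × (Fin m → ℂ) → ℂ) (hv : Measurable v)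
    (hv_hol : ∀ z ∈ {z : Fin n → ℂ | ρ₀ z < 0},
      DifferentiableOn ℂ (fun w => v (z, w))
        {w : Fin m → ℂ | (∑ i, ‖w i‖ ^ 2) ^ q < -ρ₀ z})
    (g : (Fin n → ℂ) → ℂ) (hg : Measurable g)
    (hint : IntegrableOn (fun x => v x * (starRingEnd ℂ) (g x.1))
      {x : (Fin n → ℂ) × (Fin m → ℂ) | ρ₀ x.1 + (∑ i, ‖x.2 i‖ ^ 2) ^ q < 0}) :
    IntegrableOn
      (fun z => v (z, 0) * (starRingEnd ℂ) (g z) * (((-ρ₀ z) ^ ((m : ℝ) / (q : ℝ)) : ℝ) : ℂ))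
      {z : Fin n → ℂ | ρ₀ z < 0} ∧
    (volume {w : Fin m → ℂ | ∑ i, ‖w i‖ ^ 2 < 1}).toReal •
        ∫ z in {z : Fin n → ℂ | ρ₀ z < 0},
          v (z, 0) * (starRingEnd ℂ) (g z) * (((-ρ₀ z) ^ ((m : ℝ) / (q : ℝ)) : ℝ) : ℂ) =
      ∫ x in {x : (Fin n → ℂ) × (Fin m → ℂ) | ρ₀ x.1 + (∑ i, ‖x.2 i‖ ^ 2) ^ q < 0},
        v x * (starRingEnd ℂ) (g x.1) := by
  classical
  set Ω : Set (Fin n → ℂ) := {z | ρ₀ z < 0} with hΩ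
  set S : Set ((Fin n → ℂ) × (Fin m → ℂ)) :=
    {x | ρ₀ x.1 + (∑ i, ‖x.2 i‖ ^ 2) ^ q < 0} with hSdef
  set h : (Fin n → ℂ) × (Fin m → ℂ) → ℂ := fun x => v x * (starRingEnd ℂ) (g x.1) with hh
  have hΩo : IsOpen Ω := isOpen_lt hρ₀ continuous_const
  have hΩm : MeasurableSet Ω := hΩo.measurableSet
  have hSo : IsOpen S := by
    apply isOpen_lt _ continuous_const
    exact (hρ₀.comp continuous_fst).add ((Qcont.comp continuous_snd).pow q)
  have hSm : MeasurableSet S := hSo.measurableSet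
  set H : (Fin n → ℂ) × (Fin m → ℂ) → ℂ := S.indicator h with hH
  have hHi : Integrable H ((volume : Measure (Fin n → ℂ)).prod (volume : Measure (Fin m → ℂ))) := by
    rw [← Measure.volume_eq_prod]
    exact (integrable_indicator_iff hSm).2 hint
  set Vol1 : ℝ := (volume {w : Fin m → ℂ | ∑ i, ‖w i‖ ^ 2 < 1}).toReal with hVol1
  have hV1pos : 0 < Vol1 := by
    rw [hVol1]
    apply ENNReal.toReal_pos
    · refine ((Bopen (m := m) 1).measure_pos volume ⟨0, ?_⟩).ne'
      simp
    · exact (Bfin 1).ne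
  set T : (Fin n → ℂ) → ℂ :=
    fun z => v (z, 0) * (starRingEnd ℂ) (g z) * (((-ρ₀ z) ^ ((m : ℝ) / (q : ℝ)) : ℝ) : ℂ) with hT
  set ψ : (Fin n → ℂ) → ℂ := Ω.indicator (fun z => T z * (Vol1 : ℂ)) with hψdef
  -- pointwise identification of fiber integrals
  have hae : ∀ᵐ z : Fin n → ℂ, (∫ w : Fin m → ℂ, H (z, w)) = ψ z := by
    filter_upwards [hHi.prod_right_ae] with z hzint
    by_cases hz : ρ₀ z < 0
    · have hb : (0:ℝ) < -ρ₀ z := by linarith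
      set r : ℝ := (-ρ₀ z) ^ ((q:ℝ)⁻¹) with hrdef
      have hrpos : 0 < r := Real.rpow_pos_of_pos hb _
      set Bz : Set (Fin m → ℂ) := {w | ∑ i, ‖w i‖ ^ 2 < r} with hBz
      have hslice : ∀ w : Fin m → ℂ, (z, w) ∈ S ↔ w ∈ Bz := by
        intro w
        simp only [hSdef, Set.mem_setOf_eq, hBz]
        rw [← pow_lt_iff_rpow hq (Qnonneg w) hb]
        constructor <;> intro <;> linarith
      have hind : (fun w : Fin m → ℂ => H (z, w)) = Bz.indicator (fun w => h (z, w)) := by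
        funext w
        by_cases hw : w ∈ Bz
        · rw [Set.indicator_of_mem hw, hH, Set.indicator_of_mem ((hslice w).2 hw)]
        · rw [Set.indicator_of_notMem hw, hH,
            Set.indicator_of_notMem (fun hc => hw ((hslice w).1 hc))]
      have hBzm : MeasurableSet Bz := (Bopen r).measurableSet
      have hiz : IntegrableOn (fun w => h (z, w)) Bz := by
        rw [hind] at hzint
        exact (integrable_indicator_iff hBzm).1 hzint
      have hdz : DifferentiableOn ℂ (fun w => h (z, w)) Bz := by
        have hseteq : {w : Fin m → ℂ | (∑ i, ‖w i‖ ^ 2) ^ q < -ρ₀ z} = Bz := by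
          ext w
          simp only [Set.mem_setOf_eq, hBz]
          exact pow_lt_iff_rpow hq (Qnonneg w) hb
        have := (hv_hol z hz).mul_const ((starRingEnd ℂ) (g z))
        rw [hseteq] at this
        exact this
      have hMV := ballMV hrpos hdz hiz
      have hvol : (volume Bz).toReal = (-ρ₀ z) ^ ((m:ℝ)/(q:ℝ)) * Vol1 := by
        rw [hBz, Bvol hrpos, ENNReal.toReal_mul, ENNReal.toReal_ofReal (by positivity), hVol1]
        congr 1
        rw [hrdef, ← Real.rpow_natCast ((-ρ₀ z) ^ ((q:ℝ)⁻¹)) m, ← Real.rpow_mul hb.le,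
          inv_mul_eq_div]
      rw [hind, integral_indicator hBzm, hMV, hvol, hψdef,
        Set.indicator_of_mem (show z ∈ Ω from hz), hT, hh]
      push_cast [Complex.real_smul]
      ring
    · have hempty : ∀ w : Fin m → ℂ, H (z, w) = 0 := by
        intro w
        rw [hH, Set.indicator_of_notMem]
        intro hc
        rw [hSdef, Set.mem_setOf_eq] at hc
        have h1 : 0 ≤ (∑ i, ‖w i‖ ^ 2) ^ q := pow_nonneg (Qnonneg w) q
        push_neg at hz
        linarith
      simp only [hempty, integral_zero, hψdef]
      exact (Set.indicator_of_notMem (show z ∉ Ω from hz) _).symm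
  -- the integrability conclusion
  have hφint : Integrable (fun z => ∫ w, H (z, w)) volume := hHi.integral_prod_left
  have hψint : Integrable ψ volume := hφint.congr hae
  have hTVint : IntegrableOn (fun z => T z * (Vol1 : ℂ)) Ω := by
    rw [hψdef] at hψint
    exact (integrable_indicator_iff hΩm).1 hψint
  have hTint : IntegrableOn T Ω := by
    have := hTVint.mul_const ((Vol1 : ℂ)⁻¹)
    apply this.congr
    apply Filter.Eventually.of_forall
    intro z
    have : (Vol1 : ℂ) ≠ 0 := by exact_mod_cast hV1pos.ne'
    field_simp
  refine ⟨hTint, ?_⟩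
  -- the integral identity
  have e1 : ∫ x in S, h x = ∫ x, H x := (integral_indicator hSm).symm
  have e2 : ∫ x, H x = ∫ z, ∫ w, H (z, w) := by
    rw [Measure.volume_eq_prod]
    exact integral_prod H hHi
  have e3 : ∫ z, ∫ w, H (z, w) = ∫ z, ψ z := integral_congr_ae hae
  have e4 : ∫ z, ψ z = ∫ z in Ω, T z * (Vol1 : ℂ) := by
    rw [hψdef]
    exact integral_indicator hΩm
  have e5 : ∫ z in Ω, T z * (Vol1 : ℂ) = (∫ z in Ω, T z) * (Vol1 : ℂ) :=
    integral_mul_const _ _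
  rw [e1, e2, e3, e4, e5]
  rw [Complex.real_smul, mul_comm]

end Main
end
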